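/- Let P ⊂ ℝⁿ be a bounded convex polytope with facets F₁,…,F_d, and let σ₁,…,σ_d be fixed positive measures on the facets (positive constant multiples of the (n−1)-dimensional Hausdorff measure restricted to each facet). For r = (r₁,…,r_d) ∈ ℝ^d_{≥0} let dσ_r = Σᵢ rᵢσᵢ. Then the set of weights r ∈ ℝ^d_{≥0} for which the weighted polytope (P, dσ_r) is stable is a convex subset of ℝ^d_{≥0}. -/

import Mathlib

open MeasureTheory Set
open scoped ENNReal RealInnerProductSpace

noncomputable section

namespace LogStab

/-- `f` is an affine function on `ℝⁿ`. -/
def IsAffineFn {n : ℕ} (f : EuclideanSpace ℝ (Fin n) → ℝ) : Prop :=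
  ∃ (g : EuclideanSpace ℝ (Fin n) →ₗ[ℝ] ℝ) (c : ℝ), ∀ x, f x = g x + c

/-- `f` is piecewise linear: a maximum of finitely many affine functions. -/
def IsPL {n : ℕ} (f : EuclideanSpace ℝ (Fin n) → ℝ) : Prop :=
  ∃ (m : ℕ) (g : Fin (m + 1) → EuclideanSpace ℝ (Fin n) → ℝ),
    (∀ i, IsAffineFn (g i)) ∧
      ∀ x, f x = Finset.univ.sup' Finset.univ_nonempty fun i => g i x

/-- `A` is the affine function associated to the weighted polytope `(P, σ)`:
it is affine and `∫_{∂P} g dσ = ∫_P A g dλ` for every affine `g`. -/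
def IsAssociatedAffine {n : ℕ} (P : Set (EuclideanSpace ℝ (Fin n)))
    (σ : Measure (EuclideanSpace ℝ (Fin n)))
    (A : EuclideanSpace ℝ (Fin n) → ℝ) : Prop :=
  IsAffineFn A ∧
    ∀ g : EuclideanSpace ℝ (Fin n) → ℝ, IsAffineFn g →
      ∫ x, g x ∂σ = ∫ x in P, A x * g x

/-- The functional `L(f) = ∫_{∂P} f dσ − ∫_P A f dλ`. -/
def LF {n : ℕ} (P : Set (EuclideanSpace ℝ (Fin n)))
    (σ : Measure (EuclideanSpace ℝ (Fin n)))
    (A f : EuclideanSpace ℝ (Fin n) → ℝ) : ℝ :=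
  (∫ x, f x ∂σ) - ∫ x in P, A x * f x

/-- `f` coincides with an affine function on `P`. -/
def AffineOn {n : ℕ} (P : Set (EuclideanSpace ℝ (Fin n)))
    (f : EuclideanSpace ℝ (Fin n) → ℝ) : Prop :=
  ∃ g, IsAffineFn g ∧ EqOn f g P

/-- The weighted polytope `(P, σ)` is stable: `L(f) ≥ 0` for every piecewise linear `f`,
with equality iff `f` is affine (on `P`). -/
def IsStable {n : ℕ} (P : Set (EuclideanSpace ℝ (Fin n)))
    (σ : Measure (EuclideanSpace ℝ (Fin n))) : Prop :=
  ∃ A, IsAssociatedAffine P σ A ∧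
    ∀ f, IsPL f → 0 ≤ LF P σ A f ∧ (LF P σ A f = 0 ↔ AffineOn P f)

/-- `(P, σ)` is strictly semistable: `L(f) ≥ 0` for every piecewise linear `f`,
and `L(f) = 0` for some non-affine piecewise linear `f`. -/
def IsStrictlySemistable {n : ℕ} (P : Set (EuclideanSpace ℝ (Fin n)))
    (σ : Measure (EuclideanSpace ℝ (Fin n))) : Prop :=
  ∃ A, IsAssociatedAffine P σ A ∧ (∀ f, IsPL f → 0 ≤ LF P σ A f) ∧
    ∃ f, IsPL f ∧ LF P σ A f = 0 ∧ ¬ AffineOn P f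

/-- A (bounded convex) polytope: the convex hull of a nonempty finite set. -/
def IsPolytope {n : ℕ} (P : Set (EuclideanSpace ℝ (Fin n))) : Prop :=
  ∃ S : Finset (EuclideanSpace ℝ (Fin n)), S.Nonempty ∧
    P = convexHull ℝ (S : Set (EuclideanSpace ℝ (Fin n)))

/-- `F` is the face of `P` cut out by the affine function `g`, nonnegative on `P`. -/
def IsFaceFor {n : ℕ} (P F : Set (EuclideanSpace ℝ (Fin n)))
    (g : EuclideanSpace ℝ (Fin n) → ℝ) : Prop :=
  IsAffineFn g ∧ (∀ x ∈ P, 0 ≤ g x) ∧ F = P ∩ g ⁻¹' {0}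

/-- `F` is a facet of `P`: a nonempty face cut out by a nonconstant affine function,
where the supporting half-space is unique (up to positive scaling). -/
def IsFacetOf {n : ℕ} (P F : Set (EuclideanSpace ℝ (Fin n))) : Prop :=
  F.Nonempty ∧ (∃ g, IsFaceFor P F g ∧ ¬ ∃ c : ℝ, ∀ x, g x = c) ∧
    ∀ g₁ g₂, IsFaceFor P F g₁ → IsFaceFor P F g₂ →
      (¬ ∃ c : ℝ, ∀ x, g₁ x = c) → (¬ ∃ c : ℝ, ∀ x, g₂ x = c) →
      ∃ a : ℝ, 0 < a ∧ ∀ x, g₂ x = a * g₁ x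

/-- The Euclidean plane. -/
abbrev Plane : Type := EuclideanSpace ℝ (Fin 2)

/-- The point `(a, b)` of the plane. -/
def pt (a b : ℝ) : Plane := (WithLp.equiv 2 (Fin 2 → ℝ)).symm ![a, b]

/-- The `i`-th coordinate of a point of the plane. -/
def coord (i : Fin 2) (x : Plane) : ℝ := WithLp.equiv 2 (Fin 2 → ℝ) x i

/-- The segment `[a, b]` is an edge (a facet) of the polygon `P`. -/
def IsEdgeOf (P : Set Plane) (a b : Plane) : Prop :=
  a ≠ b ∧ ∃ g, IsFaceFor P (segment ℝ a b) g ∧ ¬ ∃ c : ℝ, ∀ x, g x = c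

/-- The measure on the segment `[v, w]` obtained as the pushforward of Lebesgue measure
on `[0,1]` under the affine parametrisation of the segment. -/
def segMeasure (v w : Plane) : Measure Plane :=
  Measure.map (fun u : ℝ => (1 - u) • v + u • w) (volume.restrict (Icc (0 : ℝ) 1))

/-- The affine function `l_{s,t}` determined by the points
`p = (1−s)v + sw` and `q = (1−t)v' + tw'`:  `l_{s,t}(x,y) = ax + by + c` with
`a = q₂ − p₂`, `b = p₁ − q₁`, `c = −ap₁ − bp₂`. -/
def creaseFn (v w v' w' : Plane) (s t : ℝ) (x : Plane) : ℝ :=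
  (coord 1 ((1 - t) • v' + t • w') - coord 1 ((1 - s) • v + s • w)) * coord 0 x +
    (coord 0 ((1 - s) • v + s • w) - coord 0 ((1 - t) • v' + t • w')) * coord 1 x +
    (-((coord 1 ((1 - t) • v' + t • w') - coord 1 ((1 - s) • v + s • w)) *
          coord 0 ((1 - s) • v + s • w)) -
      (coord 0 ((1 - s) • v + s • w) - coord 0 ((1 - t) • v' + t • w')) *
        coord 1 ((1 - s) • v + s • w))

/-- `φ(s,t) = L(max{0, l_{s,t}})`, the Donaldson–Futaki invariant of the simple
piecewise linear function with crease `l_{s,t}⁻¹(0)`. -/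
def phiFun (P : Set Plane) (σ : Measure Plane) (A : Plane → ℝ)
    (v w v' w' : Plane) (s t : ℝ) : ℝ :=
  LF P σ A fun x => max 0 (creaseFn v w v' w' s t x)

/-- The Hessian (matrix of second partial derivatives) of `f : ℝ² → ℝ` at `(s₀, t₀)`. -/
def hess (f : ℝ → ℝ → ℝ) (s₀ t₀ : ℝ) : Matrix (Fin 2) (Fin 2) ℝ :=
  !![deriv (fun s => deriv (fun s' => f s' t₀) s) s₀,
      deriv (fun s => deriv (fun t => f s t) t₀) s₀;
      deriv (fun t => deriv (fun s => f s t) s₀) t₀,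
      deriv (fun t => deriv (fun t' => f s₀ t') t) t₀]

/-- The vertices `v₁ = (0,0)`, `v₂ = (1,0)`, `v₃ = (1+p, q)`, `v₄ = (0,k)` of the
quadrilateral `Q`. -/
def quadV (p q k : ℝ) : Fin 4 → Plane := ![pt 0 0, pt 1 0, pt (1 + p) q, pt 0 k]

/-- The quadrilateral `Q` with parameters `p, q, k`. The edge `Eᵢ₊₁` is the segment from
`quadV p q k i` to `quadV p q k (i+1)`. -/
def quadQ (p q k : ℝ) : Set Plane := convexHull ℝ (Set.range (quadV p q k))

/-- The canonical boundary measures on the four edges of `Q`: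
`dx` on `E₁`, `(1/q) dy` on `E₂`, `(1+p) dx` on `E₃` and `dy` on `E₄`. -/
def quadEdgeMeasure (p q k : ℝ) : Fin 4 → Measure Plane :=
  ![segMeasure (pt 0 0) (pt 1 0),
    segMeasure (pt 1 0) (pt (1 + p) q),
    ENNReal.ofReal ((1 + p) ^ 2) • segMeasure (pt (1 + p) q) (pt 0 k),
    ENNReal.ofReal k • segMeasure (pt 0 k) (pt 0 0)]

/-- The boundary measure `dσ_r = Σᵢ rᵢ Eᵢ` on `∂Q` with weights `r`. -/
def quadMeasure (p q k : ℝ) (r : Fin 4 → ℝ) : Measure Plane :=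
  ∑ i, ENNReal.ofReal (r i) • quadEdgeMeasure p q k i

/-- The weight `(1−r) Eᵢ + r Eⱼ`. -/
def wt (i j : Fin 4) (r : ℝ) : Fin 4 → ℝ := fun m =>
  if m = i then 1 - r else if m = j then r else 0

/-- The segments `[a,b]` and `[c,d]` are parallel. -/
def Parallel2 (a b c d : Plane) : Prop := ∃ t : ℝ, d - c = t • (b - a)

/-- Edges `i` and `j` of the quadrilateral `Q` are parallel. -/
def quadEdgesParallel (p q k : ℝ) (i j : Fin 4) : Prop :=
  Parallel2 (quadV p q k i) (quadV p q k (i + 1)) (quadV p q k j) (quadV p q k (j + 1))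

/-- The function `φ` associated to the pair of opposite edges of `Q` adjacent to the
edge `e`, normalised so that the parameter `(0,0)` corresponds to the crease being the
edge `e`, and `(1,0)`, `(0,1)` correspond to the creases being the two diagonals of `Q`. -/
def phiAtEdge (p q k : ℝ) (σ : Measure Plane) (A : Plane → ℝ) (e : Fin 4)
    (s t : ℝ) : ℝ :=
  phiFun (quadQ p q k) σ A (quadV p q k (e + 1)) (quadV p q k (e + 2))
    (quadV p q k e) (quadV p q k (e + 3)) s t

/-- `v` lists, in cyclic order, the vertices of a convex quadrilateral: each consecutive
segment is an edge (facet) of the convex hull of the four points. -/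
def IsConvexQuad (v : Fin 4 → Plane) : Prop :=
  ∀ i : Fin 4, IsEdgeOf (convexHull ℝ (Set.range v)) (v i) (v (i + 1))

/-- The nonnegative boundary measure on the quadrilateral with vertices `v` assigning to
the edge from `v i` to `v (i+1)` the weight `r i` (times 1-dimensional Hausdorff measure). -/
def genQuadMeasure (v : Fin 4 → Plane) (r : Fin 4 → ℝ) : Measure Plane :=
  ∑ i, ENNReal.ofReal (r i) •
    (μH[1] : Measure Plane).restrict (segment ℝ (v i) (v (i + 1)))

/-- The `i`-th coordinate of a point of `ℝⁿ`. -/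
def coordN {n : ℕ} (x : EuclideanSpace ℝ (Fin n)) (i : Fin n) : ℝ :=
  WithLp.equiv 2 (Fin n → ℝ) x i

/-- The partial derivative `∂ᵢ g` of `g : ℝⁿ → ℝ`. -/
def pd {n : ℕ} (i : Fin n) (g : EuclideanSpace ℝ (Fin n) → ℝ)
    (x : EuclideanSpace ℝ (Fin n)) : ℝ :=
  fderiv ℝ g x (EuclideanSpace.single i 1)


/-! ### Auxiliary lemmas for `statement0` -/

open scoped NNReal in
theorem IsAffineFn.continuous' {n : ℕ} {f : EuclideanSpace ℝ (Fin n) → ℝ}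
    (hf : IsAffineFn f) : Continuous f := by
  obtain ⟨g, c, h⟩ := hf
  have : f = fun x => g x + c := funext h
  rw [this]
  exact g.continuous_of_finiteDimensional.add continuous_const

theorem continuous_sup'_aux {ι X : Type*} [TopologicalSpace X] (s : Finset ι) (hs : s.Nonempty)
    (g : ι → X → ℝ) (hg : ∀ i, Continuous (g i)) :
    Continuous fun x => s.sup' hs fun i => g i x := by
  induction hs using Finset.Nonempty.cons_induction with
  | singleton a => simp only [Finset.sup'_singleton]; exact hg a
  | cons a t ha ht ih =>
    have : (fun x => (Finset.cons a t ha).sup' (Finset.cons_nonempty ha) fun i => g i x)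
        = fun x => max (g a x) (t.sup' ht fun i => g i x) := by
      funext x; rw [Finset.sup'_cons ht]
    rw [this]
    exact (hg a).max ih

theorem IsPL.continuous' {n : ℕ} {f : EuclideanSpace ℝ (Fin n) → ℝ}
    (hf : IsPL f) : Continuous f := by
  obtain ⟨m, g, hg, h⟩ := hf
  have : f = fun x => Finset.univ.sup' Finset.univ_nonempty fun i => g i x := funext h
  rw [this]
  exact continuous_sup'_aux _ _ _ fun i => (hg i).continuous'

theorem IsAffineFn.combo {n : ℕ} {A₁ A₂ : EuclideanSpace ℝ (Fin n) → ℝ}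
    (h₁ : IsAffineFn A₁) (h₂ : IsAffineFn A₂) (a b : ℝ) :
    IsAffineFn (fun x => a * A₁ x + b * A₂ x) := by
  obtain ⟨g₁, c₁, hg₁⟩ := h₁
  obtain ⟨g₂, c₂, hg₂⟩ := h₂
  refine ⟨a • g₁ + b • g₂, a * c₁ + b * c₂, fun x => ?_⟩
  simp only [hg₁ x, hg₂ x, LinearMap.add_apply, LinearMap.smul_apply, smul_eq_mul]
  ring

theorem facet_isCompact {n : ℕ} {P F : Set (EuclideanSpace ℝ (Fin n))}
    (hPc : IsCompact P) (hF : IsFacetOf P F) : IsCompact F := by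
  obtain ⟨-, ⟨g, ⟨hgaff, -, hFeq⟩, -⟩, -⟩ := hF
  rw [hFeq]
  exact hPc.inter_right (isClosed_singleton.preimage hgaff.continuous')

open scoped NNReal in
theorem facet_hausdorff_ne_top {n : ℕ} {P F : Set (EuclideanSpace ℝ (Fin n))}
    (hPc : IsCompact P) (hF : IsFacetOf P F) :
    μH[(n : ℝ) - 1] F ≠ ∞ := by
  obtain ⟨⟨x₀, hx₀⟩, ⟨g, ⟨⟨glin, c0, hg⟩, -, hFeq⟩, hgnc⟩, -⟩ := hF
  have hFP : F ⊆ P := hFeq ▸ inter_subset_left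
  -- the linear part is nonzero
  have hglin : glin ≠ 0 := by
    rintro rfl
    exact hgnc ⟨c0, fun x => by simpa using hg x⟩
  have hsurj : Function.Surjective glin := by
    obtain ⟨x, hx⟩ : ∃ x, glin x ≠ 0 := by
      by_contra h
      push_neg at h
      exact hglin (LinearMap.ext fun x => by simpa using h x)
    intro y
    refine ⟨(y / glin x) • x, ?_⟩
    simp [LinearMap.map_smul, smul_eq_mul, div_mul_cancel₀ _ hx]
  set W := LinearMap.ker glin with hW
  have hrank : 1 + Module.finrank ℝ W = n := by
    have h1 := glin.finrank_range_add_finrank_ker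
    rw [LinearMap.range_eq_top.mpr hsurj, finrank_top, finrank_euclideanSpace_fin] at h1
    simpa [Module.finrank_self] using h1
  set m := Module.finrank ℝ W with hm
  have hd : (n : ℝ) - 1 = (m : ℝ) := by
    rw [← hrank]; push_cast; ring
  let B := stdOrthonormalBasis ℝ W
  let e := WithLp.equiv 2 (Fin m → ℝ)
  let φ : (Fin m → ℝ) → EuclideanSpace ℝ (Fin n) :=
    fun u => x₀ + ((B.repr.symm (e.symm u) : W) : EuclideanSpace ℝ (Fin n))
  -- translation-plus-inclusion is an isometry
  have h1 : Isometry (fun w : W => x₀ + (w : EuclideanSpace ℝ (Fin n))) := by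
    apply Isometry.of_dist_eq
    intro w w'
    rw [dist_add_left]
    rfl
  -- φ is Lipschitz
  set K : ℝ≥0 := (m : ℝ≥0) ^ (2⁻¹ : ℝ) with hK
  have hφL : LipschitzWith K φ := by
    intro u v
    calc edist (φ u) (φ v)
        = edist (B.repr.symm (e.symm u)) (B.repr.symm (e.symm v)) := h1.edist_eq _ _
      _ = edist (e.symm u) (e.symm v) := B.repr.symm.isometry.edist_eq _ _
      _ ≤ (K : ℝ≥0∞) * edist u v := by
          simpa [e] using
            (PiLp.antilipschitzWith_ofLp 2 (fun _ : Fin m => ℝ)) (e.symm u) (e.symm v)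
  -- φ is antilipschitz
  have hφA : AntilipschitzWith 1 φ := by
    intro u v
    have h2 := (PiLp.lipschitzWith_ofLp 2 (fun _ : Fin m => ℝ)) (e.symm u) (e.symm v)
    simp only [ENNReal.coe_one, one_mul] at h2 ⊢
    calc edist u v = edist (e (e.symm u)) (e (e.symm v)) := by simp [e]
      _ ≤ edist (e.symm u) (e.symm v) := h2
      _ = edist (B.repr.symm (e.symm u)) (B.repr.symm (e.symm v)) :=
          (B.repr.symm.isometry.edist_eq _ _).symm
      _ = edist (φ u) (φ v) := (h1.edist_eq _ _).symm
  -- F is contained in the range of φ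
  have hx₀0 : glin x₀ + c0 = 0 := by
    have := (hFeq ▸ hx₀ : x₀ ∈ P ∩ g ⁻¹' {0}).2
    simpa [hg x₀] using this
  have hFr : F ⊆ range φ := by
    intro y hy
    have hy0 : glin y + c0 = 0 := by
      have := (hFeq ▸ hy : y ∈ P ∩ g ⁻¹' {0}).2
      simpa [hg y] using this
    have hw : y - x₀ ∈ W := by
      simp only [hW, LinearMap.mem_ker, map_sub]
      linarith
    refine ⟨e (B.repr ⟨y - x₀, hw⟩), ?_⟩
    simp [φ, e]
  -- the preimage is bounded
  set s := φ ⁻¹' F with hs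
  have hsb : Bornology.IsBounded s := hφA.isBounded_preimage (hPc.isBounded.subset hFP)
  have hFs : F = φ '' s := (Set.image_preimage_eq_iff.mpr hFr).symm
  -- volume of the preimage is finite
  obtain ⟨R, hR⟩ := hsb.subset_closedBall 0
  have hvol : volume s < ∞ :=
    lt_of_le_of_lt (measure_mono hR) measure_closedBall_lt_top
  -- put everything together
  rw [hFs, hd]
  have hpi : (μH[(m : ℝ)] : Measure (Fin m → ℝ)) = volume := by
    simpa using (hausdorffMeasure_pi_real (ι := Fin m))
  have hle := hφL.hausdorffMeasure_image_le (d := (m : ℝ)) (by positivity) s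
  rw [hpi] at hle
  refine ne_top_of_le_ne_top ?_ hle
  exact (ENNReal.mul_lt_top (ENNReal.rpow_lt_top_of_nonneg (by positivity) ENNReal.coe_ne_top)
    hvol).ne


/-- For a bounded convex polytope `P ⊆ ℝⁿ` with facets `F₁, …, F_d`
carrying fixed positive measures `σᵢ` (positive constant multiples of `(n−1)`-dimensional
Hausdorff measure on the facets), the set of weights `r ∈ ℝ^d_{≥0}` for which
`(P, Σᵢ rᵢ σᵢ)` is stable is a convex subset of `ℝ^d_{≥0}`. -/
theorem statement0 (n d : ℕ) (P : Set (EuclideanSpace ℝ (Fin n)))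
    (hP : IsPolytope P)
    (F : Fin d → Set (EuclideanSpace ℝ (Fin n)))
    (hF : ∀ i, IsFacetOf P (F i))
    (hFall : ∀ G, IsFacetOf P G → ∃ i, G = F i)
    (c : Fin d → ℝ) (hc : ∀ i, 0 < c i)
    (σ : Fin d → Measure (EuclideanSpace ℝ (Fin n)))
    (hσ : ∀ i, σ i = ENNReal.ofReal (c i) •
      (μH[(n : ℝ) - 1] : Measure (EuclideanSpace ℝ (Fin n))).restrict (F i)) :
    Convex ℝ {r : Fin d → ℝ | (∀ i, 0 ≤ r i) ∧
      IsStable P (∑ i, ENNReal.ofReal (r i) • σ i)} := by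
  -- `P` is compact
  obtain ⟨S, -, hPS⟩ := hP
  have hPc : IsCompact P := hPS ▸ (S.finite_toSet.isCompact_convexHull ℝ)
  -- every continuous function is integrable with respect to each `σ i`
  have hInt : ∀ (i : Fin d) (f : EuclideanSpace ℝ (Fin n) → ℝ), Continuous f →
      Integrable f (σ i) := by
    intro i f hf
    rw [hσ i]
    have hFc : IsCompact (F i) := facet_isCompact hPc (hF i)
    obtain ⟨C, hC⟩ := hFc.exists_bound_of_continuousOn hf.continuousOn
    refine Integrable.smul_measure ?_ ENNReal.ofReal_ne_top
    refine Measure.integrableOn_of_bounded (M := C) (facet_hausdorff_ne_top hPc (hF i))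
      hf.aestronglyMeasurable ?_
    exact (ae_restrict_mem hFc.isClosed.measurableSet).mono fun x hx => hC x hx
  intro r₁ hr₁ r₂ hr₂ a b ha hb hab
  obtain ⟨hr₁0, A₁, ⟨hA₁aff, hA₁as⟩, hst₁⟩ := hr₁
  obtain ⟨hr₂0, A₂, ⟨hA₂aff, hA₂as⟩, hst₂⟩ := hr₂
  set μ := ∑ i, ENNReal.ofReal (r₁ i) • σ i with hμ
  set ν := ∑ i, ENNReal.ofReal (r₂ i) • σ i with hν
  -- the combined measure
  have hmeas : (∑ i, ENNReal.ofReal ((a • r₁ + b • r₂) i) • σ i)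
      = ENNReal.ofReal a • μ + ENNReal.ofReal b • ν := by
    rw [hμ, hν, Finset.smul_sum, Finset.smul_sum, ← Finset.sum_add_distrib]
    refine Finset.sum_congr rfl fun i _ => ?_
    rw [Pi.add_apply, Pi.smul_apply, Pi.smul_apply, smul_eq_mul, smul_eq_mul,
      ENNReal.ofReal_add (mul_nonneg ha (hr₁0 i)) (mul_nonneg hb (hr₂0 i)),
      ENNReal.ofReal_mul ha, ENNReal.ofReal_mul hb, add_smul, smul_smul, smul_smul]
  have hIntμ : ∀ f : EuclideanSpace ℝ (Fin n) → ℝ, Continuous f → Integrable f μ := fun f hf =>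
    integrable_finset_sum_measure.mpr fun i _ =>
      (hInt i f hf).smul_measure ENNReal.ofReal_ne_top
  have hIntν : ∀ f : EuclideanSpace ℝ (Fin n) → ℝ, Continuous f → Integrable f ν := fun f hf =>
    integrable_finset_sum_measure.mpr fun i _ =>
      (hInt i f hf).smul_measure ENNReal.ofReal_ne_top
  -- splitting of the boundary integral
  have hsplit : ∀ f : EuclideanSpace ℝ (Fin n) → ℝ, Continuous f →
      ∫ x, f x ∂(ENNReal.ofReal a • μ + ENNReal.ofReal b • ν)
        = a * ∫ x, f x ∂μ + b * ∫ x, f x ∂ν := by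
    intro f hf
    rw [integral_add_measure ((hIntμ f hf).smul_measure ENNReal.ofReal_ne_top)
        ((hIntν f hf).smul_measure ENNReal.ofReal_ne_top),
      integral_smul_measure, integral_smul_measure, ENNReal.toReal_ofReal ha,
      ENNReal.toReal_ofReal hb, smul_eq_mul, smul_eq_mul]
  -- the combined associated affine function
  set A : EuclideanSpace ℝ (Fin n) → ℝ := fun x => a * A₁ x + b * A₂ x with hA
  have hAaff : IsAffineFn A := hA₁aff.combo hA₂aff a b
  -- splitting of the interior integral
  have hvsplit : ∀ f : EuclideanSpace ℝ (Fin n) → ℝ, Continuous f →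
      ∫ x in P, A x * f x
        = a * (∫ x in P, A₁ x * f x) + b * ∫ x in P, A₂ x * f x := by
    intro f hf
    have h₁ : IntegrableOn (fun x => A₁ x * f x) P volume :=
      (hA₁aff.continuous'.mul hf).continuousOn.integrableOn_compact hPc
    have h₂ : IntegrableOn (fun x => A₂ x * f x) P volume :=
      (hA₂aff.continuous'.mul hf).continuousOn.integrableOn_compact hPc
    have heq : (fun x => A x * f x)
        = fun x => a * (A₁ x * f x) + b * (A₂ x * f x) := by
      funext x; simp only [hA]; ring
    rw [heq, integral_add (h₁.const_mul a) (h₂.const_mul b),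
      integral_const_mul, integral_const_mul]
  -- splitting of the functional `L`
  have hLF : ∀ f : EuclideanSpace ℝ (Fin n) → ℝ, Continuous f →
      LF P (ENNReal.ofReal a • μ + ENNReal.ofReal b • ν) A f
        = a * LF P μ A₁ f + b * LF P ν A₂ f := by
    intro f hf
    simp only [LF]
    rw [hsplit f hf]
    rw [hvsplit f hf]
    ring
  refine ⟨fun i => ?_, ?_⟩
  · simp only [Pi.add_apply, Pi.smul_apply, smul_eq_mul]
    exact add_nonneg (mul_nonneg ha (hr₁0 i)) (mul_nonneg hb (hr₂0 i))
  rw [hmeas]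
  refine ⟨A, ⟨hAaff, fun g hg => ?_⟩, fun f hf => ?_⟩
  · rw [hsplit g hg.continuous', hA₁as g hg, hA₂as g hg]
    exact (hvsplit g hg.continuous').symm
  · have hfc := hf.continuous'
    have h1 := hst₁ f hf
    have h2 := hst₂ f hf
    have hL := hLF f hfc
    rw [hL]
    have ha1 := h1.1
    have ha2 := h2.1
    refine ⟨add_nonneg (mul_nonneg ha ha1) (mul_nonneg hb ha2), ?_, ?_⟩
    · intro h0
      have hab' : 0 < a ∨ 0 < b := by
        rcases lt_or_eq_of_le ha with h | h
        · exact Or.inl h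
        · right; rw [← h] at hab; linarith
      rcases hab' with hpos | hpos
      · have hz : LF P μ A₁ f = 0 := by nlinarith [mul_nonneg hb ha2]
        exact h1.2.mp hz
      · have hz : LF P ν A₂ f = 0 := by nlinarith [mul_nonneg ha ha1]
        exact h2.2.mp hz
    · intro haff
      rw [h1.2.mpr haff, h2.2.mpr haff]
      ring

end LogStab
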